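/- Let Z be the (n+1)×(n+1) spectral differentiation matrix for distinct nodes x_0,...,x_n, and let P(z) = a_k z^k + ... + a_m z^m be a real polynomial with a_k ≠ 0 and k ≤ n. Then rank P(Z) = n + 1 - k. -/

import Mathlib

open Polynomial Matrix Finset

namespace Stmt9Aux

/-- derivative in monomial basis -/
noncomputable def Dmat (n : ℕ) : Matrix (Fin (n+1)) (Fin (n+1)) ℝ :=
  Matrix.of fun i m => if (i:ℕ)+1 = (m:ℕ) then ((m:ℕ) : ℝ) else 0

lemma Dpow {n : ℕ} (j : ℕ) (i m : Fin (n+1)) :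
    (Dmat n ^ j) i m
      = if (i:ℕ) + j = (m:ℕ) then (((m:ℕ).descFactorial j : ℕ) : ℝ) else 0 := by
  induction j generalizing m with
  | zero =>
    simp only [pow_zero, Nat.add_zero, Nat.descFactorial_zero]
    by_cases h : i = m
    · simp [h, Matrix.one_apply]
    · have : (i:ℕ) ≠ (m:ℕ) := fun hc => h (Fin.ext hc)
      simp [Matrix.one_apply, h, this]
  | succ j ih =>
    rw [pow_succ, Matrix.mul_apply]
    rcases Nat.eq_zero_or_eq_succ_pred (m:ℕ) with hm | hm
    · have : ∀ t : Fin (n+1), (Dmat n ^ j) i t * Dmat n t m = 0 := by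
        intro t
        have : Dmat n t m = 0 := by simp [Dmat, hm]
        rw [this, mul_zero]
      rw [Finset.sum_eq_zero (fun t _ => this t)]
      rw [if_neg (by omega)]
    · set s := (m:ℕ) - 1 with hs
      have hm' : (m:ℕ) = s + 1 := by omega
      have hslt : s < n + 1 := by omega
      have key : ∑ t : Fin (n+1), (Dmat n ^ j) i t * Dmat n t m
          = (Dmat n ^ j) i ⟨s, hslt⟩ * Dmat n ⟨s, hslt⟩ m := by
        apply Fintype.sum_eq_single (⟨s, hslt⟩ : Fin (n+1))
        intro t ht
        have : (t:ℕ) + 1 ≠ (m:ℕ) := by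
          intro hc
          apply ht; apply Fin.ext; simp; omega
        simp [Dmat, this]
      rw [key, ih]
      have hD : Dmat n ⟨s, hslt⟩ m = ((m:ℕ) : ℝ) := by simp [Dmat, hm']
      rw [hD]
      by_cases hc : (i:ℕ) + j = s
      · rw [if_pos hc, if_pos (by omega)]
        rw [hm', Nat.succ_descFactorial_succ]
        push_cast; ring
      · rw [if_neg hc, if_neg (by omega), zero_mul]


lemma aevalD_zero {n : ℕ} (P : Polynomial ℝ) (k : ℕ) (hlow : ∀ i < k, P.coeff i = 0)
    (i m : Fin (n+1)) (hm : (m:ℕ) < (i:ℕ) + k) :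
    (Polynomial.aeval (Dmat n) P) i m = 0 := by
  rw [Polynomial.aeval_eq_sum_range, Matrix.sum_apply]
  apply Finset.sum_eq_zero
  intro j _
  rw [Matrix.smul_apply, Dpow]
  by_cases hc : (i:ℕ) + j = (m:ℕ)
  · have : j < k := by omega
    rw [hlow j this]; simp
  · rw [if_neg hc]; simp

lemma aevalD_diag {n : ℕ} (P : Polynomial ℝ) (k : ℕ) (hk : P.coeff k ≠ 0)
    (i m : Fin (n+1)) (hm : (m:ℕ) = (i:ℕ) + k) :
    (Polynomial.aeval (Dmat n) P) i m ≠ 0 := by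
  have hkd : k ≤ P.natDegree := Polynomial.le_natDegree_of_ne_zero hk
  rw [Polynomial.aeval_eq_sum_range, Matrix.sum_apply]
  have key : ∑ j ∈ Finset.range (P.natDegree + 1), (P.coeff j • Dmat n ^ j) i m
      = P.coeff k * (((m:ℕ).descFactorial k : ℕ) : ℝ) := by
    rw [Finset.sum_eq_single k]
    · rw [Matrix.smul_apply, Dpow, if_pos hm.symm, smul_eq_mul]
    · intro j _ hj
      rw [Matrix.smul_apply, Dpow, if_neg (by omega)]; simp
    · intro h; exact absurd (Finset.mem_range.mpr (by omega)) h
  rw [key]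
  apply mul_ne_zero hk
  have : (m:ℕ).descFactorial k ≠ 0 := by
    simp only [ne_eq, Nat.descFactorial_eq_zero_iff_lt]
    omega
  exact_mod_cast this

lemma rank_shift {n : ℕ} (k : ℕ) (hkn : k ≤ n) (M : Matrix (Fin (n+1)) (Fin (n+1)) ℝ)
    (h0 : ∀ i m : Fin (n+1), (m:ℕ) < (i:ℕ) + k → M i m = 0)
    (h1 : ∀ i m : Fin (n+1), (m:ℕ) = (i:ℕ) + k → M i m ≠ 0) :
    M.rank = n + 1 - k := by
  have hcard : n + 1 - k + k = n + 1 := by omega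
  set r : Fin (n+1-k) → Fin (n+1) := fun t => ⟨t, by omega⟩ with hr
  set c : Fin (n+1-k) → Fin (n+1) := fun t => ⟨(t:ℕ) + k, by omega⟩ with hc
  -- upper bound
  have hub : M.rank ≤ n + 1 - k := by
    set F : Matrix (Fin (n+1)) (Fin (n+1-k)) ℝ := fun i t => if i = r t then 1 else 0 with hF
    have hMF : M = F * M.submatrix r id := by
      ext i m
      rw [Matrix.mul_apply]
      by_cases h : (i:ℕ) < n + 1 - k
      · rw [Fintype.sum_eq_single (⟨(i:ℕ), h⟩ : Fin (n+1-k))]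
        · have h2 : i = r ⟨(i:ℕ), h⟩ := by apply Fin.ext; simp [hr]
          simp [hF, ← h2]
        · intro t ht
          have : i ≠ r t := by
            intro hc2; apply ht; apply Fin.ext
            have := congrArg (Fin.val) hc2; simpa [hr] using this.symm
          simp [hF, this]
      · have hz : M i m = 0 := h0 i m (by omega)
        rw [hz]
        symm
        apply Finset.sum_eq_zero
        intro t _
        have : i ≠ r t := by
          intro hc2
          have := congrArg (Fin.val) hc2
          simp [hr] at this
          omega
        simp [hF, this]
    have step : M.rank ≤ (M.submatrix r id).rank := by
      have h3 := Matrix.rank_mul_le_right F (M.submatrix r id)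
      rwa [← hMF] at h3
    calc M.rank ≤ (M.submatrix r id).rank := step
      _ ≤ n + 1 - k := Matrix.rank_le_height _
  -- lower bound
  have hlb : n + 1 - k ≤ M.rank := by
    set B : Matrix (Fin (n+1-k)) (Fin (n+1-k)) ℝ := M.submatrix r c with hB
    have hdet : B.det ≠ 0 := by
      have htri : B.BlockTriangular id := by
        intro t s hts
        apply h0
        simp [hB, hr, hc]
        simp [id] at hts
        omega
      rw [Matrix.det_of_upperTriangular htri]
      apply Finset.prod_ne_zero_iff.mpr
      intro t _
      apply h1
      simp [hB, hr, hc]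
    have hrankB : B.rank = n + 1 - k := by
      have : IsUnit B := by
        rw [Matrix.isUnit_iff_isUnit_det]
        exact isUnit_iff_ne_zero.mpr hdet
      rw [Matrix.rank_of_isUnit B this, Fintype.card_fin]
    set E1 : Matrix (Fin (n+1-k)) (Fin (n+1)) ℝ := fun t i => if i = r t then 1 else 0 with hE1
    set E2 : Matrix (Fin (n+1)) (Fin (n+1-k)) ℝ := fun m s => if m = c s then 1 else 0 with hE2
    have hBeq : B = E1 * (M * E2) := by
      ext t s
      rw [Matrix.mul_apply, Fintype.sum_eq_single (r t)]
      · rw [Matrix.mul_apply, Fintype.sum_eq_single (c s)]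
        · simp [hB, hE1, hE2]
        · intro m hm; simp [hE2, hm]
      · intro i hi; simp [hE1, hi]
    calc n + 1 - k = B.rank := hrankB.symm
      _ ≤ (M * E2).rank := by rw [hBeq]; exact Matrix.rank_mul_le_right _ _
      _ ≤ M.rank := Matrix.rank_mul_le_left _ _
  omega


lemma pow_comm_of_comm {n : ℕ} {A B W : Matrix (Fin (n+1)) (Fin (n+1)) ℝ}
    (h : A * W = W * B) (j : ℕ) : A ^ j * W = W * B ^ j := by
  induction j with
  | zero => simp
  | succ j ih =>
    rw [pow_succ, pow_succ, Matrix.mul_assoc, h, ← Matrix.mul_assoc, ih, Matrix.mul_assoc]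

lemma aeval_comm {n : ℕ} {A B W : Matrix (Fin (n+1)) (Fin (n+1)) ℝ}
    (h : A * W = W * B) (P : Polynomial ℝ) :
    (Polynomial.aeval A P) * W = W * (Polynomial.aeval B P) := by
  induction P using Polynomial.induction_on' with
  | add p q hp hq => rw [map_add, map_add, add_mul, mul_add, hp, hq]
  | monomial m a =>
    rw [Polynomial.aeval_monomial, Polynomial.aeval_monomial, mul_assoc,
      pow_comm_of_comm h m, ← mul_assoc, Algebra.commutes, mul_assoc]

lemma ZW {n : ℕ} (x : Fin (n+1) → ℝ) (hx : Function.Injective x) :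
    (Matrix.of fun j k : Fin (n+1) =>
      Polynomial.eval (x j) (Polynomial.derivative (Lagrange.basis Finset.univ x k)))
    * (Matrix.of fun j i : Fin (n+1) => x j ^ (i:ℕ))
    = (Matrix.of fun j i : Fin (n+1) => x j ^ (i:ℕ)) * Dmat n := by
  ext j m
  rw [Matrix.mul_apply, Matrix.mul_apply]
  have hvs : Set.InjOn x (Finset.univ : Finset (Fin (n+1))) := fun a _ b _ h => hx h
  have hdeg : ((Polynomial.X : Polynomial ℝ) ^ (m:ℕ)).degree
      < ((Finset.univ : Finset (Fin (n+1))).card : ℕ) := by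
    rw [Polynomial.degree_X_pow]
    simp only [Finset.card_univ, Fintype.card_fin]
    exact_mod_cast m.isLt
  have hinterp := Lagrange.eq_interpolate_of_eval_eq (f := (Polynomial.X : Polynomial ℝ)^(m:ℕ))
    (r := fun k => x k ^ (m:ℕ)) hvs hdeg (fun i _ => by simp)
  have lhs_eq : ∑ k, (Matrix.of fun j k : Fin (n+1) =>
        Polynomial.eval (x j) (Polynomial.derivative (Lagrange.basis Finset.univ x k))) j k
          * (Matrix.of fun j i : Fin (n+1) => x j ^ (i:ℕ)) k m
      = Polynomial.eval (x j)
          (Polynomial.derivative ((Polynomial.X : Polynomial ℝ)^(m:ℕ))) := by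
    conv_rhs => rw [hinterp]
    rw [Lagrange.interpolate_apply, Polynomial.derivative_sum, Polynomial.eval_finset_sum]
    apply Finset.sum_congr rfl
    intro k _
    rw [Polynomial.derivative_C_mul, Polynomial.eval_mul, Polynomial.eval_C]
    simp [mul_comm]
  rw [lhs_eq, Polynomial.derivative_X_pow, Polynomial.eval_mul, Polynomial.eval_C,
    Polynomial.eval_pow, Polynomial.eval_X]
  rcases Nat.eq_zero_or_eq_succ_pred (m:ℕ) with hm | hm
  · rw [hm]
    symm
    push_cast [hm]
    rw [zero_mul]
    apply Finset.sum_eq_zero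
    intro i _
    have : (i:ℕ) + 1 ≠ (m:ℕ) := by omega
    simp [Dmat, this]
  · set s := (m:ℕ) - 1 with hs
    have hm' : (m:ℕ) = s + 1 := by omega
    have hslt : s < n + 1 := by omega
    rw [Fintype.sum_eq_single (⟨s, hslt⟩ : Fin (n+1))]
    · have : Dmat n ⟨s, hslt⟩ m = ((m:ℕ) : ℝ) := by simp [Dmat, hm']
      rw [Matrix.of_apply, this]
      simp only [hm', Nat.add_sub_cancel]
      ring
    · intro t ht
      have : (t:ℕ) + 1 ≠ (m:ℕ) := by
        intro hc
        apply ht; apply Fin.ext; simp; omega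
      simp [Dmat, this]

end Stmt9Aux

theorem stmt_9 (n : ℕ) (x : Fin (n + 1) → ℝ) (hx : Function.Injective x)
    (P : Polynomial ℝ) (k : ℕ) (hk : P.coeff k ≠ 0) (hlow : ∀ i < k, P.coeff i = 0)
    (hkn : k ≤ n) :
    (Polynomial.aeval (Matrix.of (fun j k : Fin (n + 1) =>
      Polynomial.eval (x j) (Polynomial.derivative (Lagrange.basis Finset.univ x k)))) P).rank
      = n + 1 - k := by
  classical
  set W : Matrix (Fin (n+1)) (Fin (n+1)) ℝ := Matrix.of fun j i : Fin (n+1) => x j ^ (i:ℕ)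
    with hW
  have hdet : W.det ≠ 0 := by
    have : W = Matrix.vandermonde x := rfl
    rw [this, Matrix.det_vandermonde]
    apply Finset.prod_ne_zero_iff.mpr
    intro i _
    apply Finset.prod_ne_zero_iff.mpr
    intro j hj
    exact sub_ne_zero.mpr (fun hc => (Finset.mem_Ioi.mp hj).ne (hx hc).symm)
  have hu : IsUnit W.det := isUnit_iff_ne_zero.mpr hdet
  have hcomm := Stmt9Aux.aeval_comm (Stmt9Aux.ZW x hx) P
  calc (Polynomial.aeval (Matrix.of (fun j k : Fin (n + 1) =>
      Polynomial.eval (x j) (Polynomial.derivative (Lagrange.basis Finset.univ x k)))) P).rank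
      = ((Polynomial.aeval (Matrix.of (fun j k : Fin (n + 1) =>
      Polynomial.eval (x j) (Polynomial.derivative (Lagrange.basis Finset.univ x k)))) P)
        * W).rank := (Matrix.rank_mul_eq_left_of_isUnit_det W _ hu).symm
    _ = (W * (Polynomial.aeval (Stmt9Aux.Dmat n) P)).rank := by rw [hcomm]
    _ = (Polynomial.aeval (Stmt9Aux.Dmat n) P).rank :=
        Matrix.rank_mul_eq_right_of_isUnit_det W _ hu
    _ = n + 1 - k := Stmt9Aux.rank_shift k hkn _
        (Stmt9Aux.aevalD_zero P k hlow) (Stmt9Aux.aevalD_diag P k hk)
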